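/- Let A ⊆ B be C*-algebras and E : B → A a conditional expectation (idempotent positive linear map onto A with E(ax) = aE(x) and E(xa) = E(x)a for a ∈ A, x ∈ B) whose restriction to the hereditary subalgebra [ABA] generated by A is multiplicative. Then E(x a y) = E(x) a E(y) for all x, y ∈ B and a ∈ A. -/

import Mathlib

open scoped ComplexOrder

variable {B : Type*} [NonUnitalNormedRing B] [StarRing B] [CStarRing B]
  [NormedSpace ℂ B] [IsScalarTower ℂ B B] [SMulCommClass ℂ B B] [StarModule ℂ B]
  [CompleteSpace B] [PartialOrder B] [StarOrderedRing B]

noncomputable instance auxNUCSA : NonUnitalCStarAlgebra B := {}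

set_option linter.unusedSectionVars false

open scoped ContinuousMapZero in
lemma cfcn_mem_closed (A : NonUnitalStarSubalgebra ℂ B) (hA : IsClosed (A : Set B))
    {h : B} (hmem : h ∈ A) (hsa : IsSelfAdjoint h) (f : ℝ → ℝ)
    (hf : ContinuousOn f (quasispectrum ℝ h)) (hf0 : f 0 = 0) :
    cfcₙ f h ∈ A := by
  rw [cfcₙ_apply f h hf hf0 hsa]
  set F : ContinuousMapZero (quasispectrum ℝ h) ℝ := ⟨⟨_, hf.restrict⟩, hf0⟩ with hF
  have h₁ := (cfcₙHom_isClosedEmbedding hsa (R := ℝ)).continuous.range_subset_closure_image_dense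
      (ContinuousMapZero.adjoin_id_dense (s := quasispectrum ℝ h))
      (Set.mem_range_self F)
  rw [← SetLike.mem_coe]
  refine closure_minimal ?_ hA h₁
  rintro - ⟨g, hg, rfl⟩
  induction hg using NonUnitalStarAlgebra.adjoin_induction with
  | mem g hg =>
    simp only [Set.mem_singleton_iff] at hg
    subst hg
    rw [SetLike.mem_coe]
    rw [cfcₙHom_id hsa]
    exact hmem
  | add g₁ g₂ h₁ h₂ p₁ p₂ => rw [SetLike.mem_coe] at *; exact map_add (cfcₙHom hsa (R := ℝ)) g₁ g₂ ▸ add_mem p₁ p₂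
  | zero => rw [SetLike.mem_coe]; exact map_zero (cfcₙHom hsa (R := ℝ)) ▸ zero_mem A
  | mul g₁ g₂ h₁ h₂ p₁ p₂ => rw [SetLike.mem_coe] at *; exact map_mul (cfcₙHom hsa (R := ℝ)) g₁ g₂ ▸ mul_mem p₁ p₂
  | smul r g hg p =>
    rw [SetLike.mem_coe] at *
    rw [map_smul]
    rw [← algebraMap_smul ℂ r ((cfcₙHom hsa) g)]
    exact SMulMemClass.smul_mem _ p
  | star g hg p =>
    rw [SetLike.mem_coe] at *
    exact map_star (cfcₙHom hsa (R := ℝ)) g ▸ star_mem p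


noncomputable def eUnit (h : B) (n : ℕ) : B := cfcₙ (fun t : ℝ => min (((n : ℝ)+1) * t) 1) h

lemma eUnit_f_cont (n : ℕ) : Continuous (fun t : ℝ => min (((n : ℝ)+1) * t) 1) :=
  (continuous_const.mul continuous_id).min continuous_const

lemma eUnit_norm_le (h : B) (hh : 0 ≤ h) (n : ℕ) : ‖eUnit h n‖ ≤ 1 := by
  apply norm_cfcₙ_le
  intro t ht
  have ht0 : 0 ≤ t := quasispectrum_nonneg_of_nonneg h hh t ht
  rw [Real.norm_eq_abs, abs_le]
  refine ⟨le_trans (by norm_num) (le_min (by positivity) zero_le_one), min_le_right _ _⟩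

lemma eUnit_cfc_bound (h : B) (hh : 0 ≤ h) (n : ℕ) :
    ‖(1 - ((eUnit h n : B) : Unitization ℂ B)) * (h : Unitization ℂ B)
      * (1 - ((eUnit h n : B) : Unitization ℂ B))‖ ≤ ((n : ℝ) + 1)⁻¹ := by
  set f : ℝ → ℝ := fun t => min (((n : ℝ)+1) * t) 1 with hfdef
  have hf0 : f 0 = 0 := by simp [hfdef]
  have hfc : Continuous f := eUnit_f_cont n
  set H : Unitization ℂ B := (h : Unitization ℂ B) with hHdef
  have hH : 0 ≤ H := Unitization.inr_nonneg_iff.mpr hh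
  have hHsa : IsSelfAdjoint H := .of_nonneg hH
  have hEe : ((eUnit h n : B) : Unitization ℂ B) = cfc f H := by
    show ((cfcₙ f h : B) : Unitization ℂ B) = cfc f H
    exact Unitization.real_cfcₙ_eq_cfc_inr h f hf0
  have h1e : 1 - ((eUnit h n : B) : Unitization ℂ B) = cfc (fun t => 1 - f t) H := by
    rw [hEe, cfc_sub (fun _ => (1:ℝ)) f H (by fun_prop) hfc.continuousOn, cfc_const_one ℝ H]
  have hgc : Continuous (fun t : ℝ => 1 - f t) := continuous_const.sub hfc
  have hprod : cfc (fun t : ℝ => (1 - f t) * t * (1 - f t)) H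
      = (1 - ((eUnit h n : B) : Unitization ℂ B)) * H * (1 - ((eUnit h n : B) : Unitization ℂ B)) := by
    calc cfc (fun t : ℝ => (1 - f t) * t * (1 - f t)) H
        = cfc (fun t : ℝ => (1 - f t) * t) H * cfc (fun t : ℝ => 1 - f t) H :=
          cfc_mul (fun t : ℝ => (1 - f t) * t) (fun t : ℝ => 1 - f t) H (hgc.mul continuous_id).continuousOn hgc.continuousOn
      _ = cfc (fun t : ℝ => 1 - f t) H * cfc (fun t : ℝ => t) H
            * cfc (fun t : ℝ => 1 - f t) H := by
          rw [cfc_mul (fun t : ℝ => 1 - f t) (fun t : ℝ => t) H hgc.continuousOn continuous_id.continuousOn]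
      _ = (1 - ((eUnit h n : B) : Unitization ℂ B)) * H * (1 - ((eUnit h n : B) : Unitization ℂ B)) := by
          rw [cfc_id' ℝ H, ← h1e]
  rw [← hprod]
  apply norm_cfc_le (by positivity)
  intro t ht
  have ht0 : 0 ≤ t := spectrum_nonneg_of_nonneg hH ht
  have hN : (0:ℝ) < (n : ℝ) + 1 := by positivity
  rcases le_total (((n : ℝ)+1) * t) 1 with h1 | h1
  · have hmin : f t = ((n : ℝ)+1) * t := min_eq_left h1
    have hg0 : 0 ≤ 1 - f t := by rw [hmin]; linarith
    have hg1 : 1 - f t ≤ 1 := by rw [hmin]; nlinarith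
    rw [Real.norm_eq_abs,
      abs_of_nonneg (mul_nonneg (mul_nonneg hg0 ht0) hg0)]
    have ht1 : t ≤ ((n : ℝ) + 1)⁻¹ := by
      rw [inv_eq_one_div, le_div_iff₀ hN]
      nlinarith
    nlinarith [mul_nonneg (mul_nonneg hg0 ht0) (sub_nonneg.mpr hg1),
      mul_nonneg ht0 (sub_nonneg.mpr hg1)]
  · have hmin : f t = 1 := min_eq_right h1
    rw [hmin]
    norm_num
    positivity

lemma eUnit_mem (A : NonUnitalStarSubalgebra ℂ B) (hA : IsClosed (A : Set B))
    {h : B} (hmem : h ∈ A) (hh : 0 ≤ h) (n : ℕ) : eUnit h n ∈ A :=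
  cfcn_mem_closed A hA hmem (.of_nonneg hh) _ (eUnit_f_cont n).continuousOn (by simp)

lemma norm_sub_mul_eUnit_sq {h : B} (hh : 0 ≤ h) (n : ℕ) {b : B} (hb : star b * b ≤ h) :
    ‖b - b * eUnit h n‖ ^ 2 ≤ ((n : ℝ) + 1)⁻¹ := by
  set e : B := eUnit h n with he
  set e' : Unitization ℂ B := (e : Unitization ℂ B) with he'
  set b' : Unitization ℂ B := (b : Unitization ℂ B) with hb'
  set H : Unitization ℂ B := (h : Unitization ℂ B) with hH
  have h1esa : IsSelfAdjoint (1 - e') := by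
    have : e' = cfc (fun t : ℝ => min (((n : ℝ)+1) * t) 1) H := by
      show ((cfcₙ _ h : B) : Unitization ℂ B) = _
      exact Unitization.real_cfcₙ_eq_cfc_inr h _ (by simp)
    rw [this]
    exact (IsSelfAdjoint.one _).sub (cfc_predicate _ H)
  have hble : star b' * b' ≤ H := by
    rw [hb', hH, ← Unitization.inr_star, ← Unitization.inr_mul]
    exact (Unitization.inr_le_iff _ _ (IsSelfAdjoint.star_mul_self b)
      (IsSelfAdjoint.of_nonneg hh)).mpr hb
  set c : Unitization ℂ B := b' * (1 - e') with hc
  have hnorm : ‖b - b * e‖ = ‖c‖ := by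
    rw [← Unitization.norm_inr (𝕜 := ℂ) (b - b * e), Unitization.inr_sub, Unitization.inr_mul,
      hc, mul_one_sub]
  have hsq : ‖c‖ ^ 2 = ‖star c * c‖ := by
    rw [CStarRing.norm_star_mul_self, sq]
  have hconj : star c * c = (1 - e') * (star b' * b') * (1 - e') := by
    rw [hc, star_mul, h1esa.star_eq]
    noncomm_ring
  have hle2 : star c * c ≤ (1 - e') * H * (1 - e') := by
    rw [hconj]
    have := star_left_conjugate_le_conjugate hble (1 - e')
    rwa [h1esa.star_eq] at this
  calc ‖b - b * e‖ ^ 2 = ‖star c * c‖ := by rw [hnorm, hsq]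
    _ ≤ ‖(1 - e') * H * (1 - e')‖ :=
        CStarAlgebra.norm_le_norm_of_nonneg_of_le (star_mul_self_nonneg c) hle2
    _ ≤ ((n : ℝ) + 1)⁻¹ := eUnit_cfc_bound h hh n

lemma norm_sub_eUnit_mul_sq {h : B} (hh : 0 ≤ h) (n : ℕ) {b : B} (hb : b * star b ≤ h) :
    ‖b - eUnit h n * b‖ ^ 2 ≤ ((n : ℝ) + 1)⁻¹ := by
  set e : B := eUnit h n with he
  set e' : Unitization ℂ B := (e : Unitization ℂ B) with he'
  set b' : Unitization ℂ B := (b : Unitization ℂ B) with hb'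
  set H : Unitization ℂ B := (h : Unitization ℂ B) with hH
  have h1esa : IsSelfAdjoint (1 - e') := by
    have : e' = cfc (fun t : ℝ => min (((n : ℝ)+1) * t) 1) H := by
      show ((cfcₙ _ h : B) : Unitization ℂ B) = _
      exact Unitization.real_cfcₙ_eq_cfc_inr h _ (by simp)
    rw [this]
    exact (IsSelfAdjoint.one _).sub (cfc_predicate _ H)
  have hble : b' * star b' ≤ H := by
    rw [hb', hH, ← Unitization.inr_star, ← Unitization.inr_mul]
    exact (Unitization.inr_le_iff _ _ (IsSelfAdjoint.mul_star_self b)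
      (IsSelfAdjoint.of_nonneg hh)).mpr hb
  set c : Unitization ℂ B := (1 - e') * b' with hc
  have hnorm : ‖b - e * b‖ = ‖c‖ := by
    rw [← Unitization.norm_inr (𝕜 := ℂ) (b - e * b), Unitization.inr_sub, Unitization.inr_mul,
      hc, one_sub_mul]
  have hsq : ‖c‖ ^ 2 = ‖c * star c‖ := by
    rw [CStarRing.norm_self_mul_star, sq]
  have hconj : c * star c = (1 - e') * (b' * star b') * (1 - e') := by
    rw [hc, star_mul, h1esa.star_eq]
    noncomm_ring
  have hle2 : c * star c ≤ (1 - e') * H * (1 - e') := by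
    rw [hconj]
    have := star_left_conjugate_le_conjugate hble (1 - e')
    rwa [h1esa.star_eq] at this
  calc ‖b - e * b‖ ^ 2 = ‖c * star c‖ := by rw [hnorm, hsq]
    _ ≤ ‖(1 - e') * H * (1 - e')‖ :=
        CStarAlgebra.norm_le_norm_of_nonneg_of_le (mul_star_self_nonneg c) hle2
    _ ≤ ((n : ℝ) + 1)⁻¹ := eUnit_cfc_bound h hh n

open Filter Topology in
lemma tendsto_mul_eUnit {h : B} (hh : 0 ≤ h) {b : B} (hb : star b * b ≤ h) :
    Tendsto (fun n => b * eUnit h n) atTop (𝓝 b) := by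
  rw [tendsto_iff_norm_sub_tendsto_zero]
  apply squeeze_zero (fun n => norm_nonneg _) (g := fun n : ℕ => Real.sqrt (((n : ℝ) + 1)⁻¹))
  · intro n
    rw [← Real.sqrt_sq (norm_nonneg (b * eUnit h n - b)), ← norm_neg, neg_sub]
    exact Real.sqrt_le_sqrt (norm_sub_mul_eUnit_sq hh n hb)
  · have h0 : Tendsto (fun n : ℕ => ((n : ℝ) + 1)⁻¹) atTop (𝓝 0) := by
      simpa using tendsto_one_div_add_atTop_nhds_zero_nat (𝕜 := ℝ)
    have h1 := (Real.continuous_sqrt.tendsto 0).comp h0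
    rw [Real.sqrt_zero] at h1
    exact h1

open Filter Topology in
lemma tendsto_eUnit_mul {h : B} (hh : 0 ≤ h) {b : B} (hb : b * star b ≤ h) :
    Tendsto (fun n => eUnit h n * b) atTop (𝓝 b) := by
  rw [tendsto_iff_norm_sub_tendsto_zero]
  apply squeeze_zero (fun n => norm_nonneg _) (g := fun n : ℕ => Real.sqrt (((n : ℝ) + 1)⁻¹))
  · intro n
    rw [← Real.sqrt_sq (norm_nonneg (eUnit h n * b - b)), ← norm_neg, neg_sub]
    exact Real.sqrt_le_sqrt (norm_sub_eUnit_mul_sq hh n hb)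
  · have h0 : Tendsto (fun n : ℕ => ((n : ℝ) + 1)⁻¹) atTop (𝓝 0) := by
      simpa using tendsto_one_div_add_atTop_nhds_zero_nat (𝕜 := ℝ)
    have h1 := (Real.continuous_sqrt.tendsto 0).comp h0
    rw [Real.sqrt_zero] at h1
    exact h1

open Filter Topology in
lemma tendsto_mul_right_aux {e : ℕ → B} (he : ∀ n, ‖e n‖ ≤ 1) {v : ℕ → B} {z : B}
    (hv : Tendsto v atTop (𝓝 z)) (hz : Tendsto (fun n => z * e n) atTop (𝓝 z)) :
    Tendsto (fun n => v n * e n) atTop (𝓝 z) := by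
  have hvz : Tendsto (fun n => ‖v n - z‖) atTop (𝓝 0) := by
    rw [tendsto_iff_norm_sub_tendsto_zero] at hv
    exact hv
  have h0 : Tendsto (fun n => (v n - z) * e n) atTop (𝓝 0) := by
    apply squeeze_zero_norm (fun n => ?_) hvz
    calc ‖(v n - z) * e n‖ ≤ ‖v n - z‖ * ‖e n‖ := norm_mul_le _ _
      _ ≤ ‖v n - z‖ * 1 := by
          have := he n; have := norm_nonneg (v n - z); nlinarith
      _ = ‖v n - z‖ := mul_one _
  have := h0.add hz
  rw [zero_add] at this
  simpa [sub_mul] using this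

open Filter Topology in
lemma tendsto_mul_left_aux {e : ℕ → B} (he : ∀ n, ‖e n‖ ≤ 1) {v : ℕ → B} {z : B}
    (hv : Tendsto v atTop (𝓝 z)) (hz : Tendsto (fun n => e n * z) atTop (𝓝 z)) :
    Tendsto (fun n => e n * v n) atTop (𝓝 z) := by
  have hvz : Tendsto (fun n => ‖v n - z‖) atTop (𝓝 0) := by
    rw [tendsto_iff_norm_sub_tendsto_zero] at hv
    exact hv
  have h0 : Tendsto (fun n => e n * (v n - z)) atTop (𝓝 0) := by
    apply squeeze_zero_norm (fun n => ?_) hvz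
    calc ‖e n * (v n - z)‖ ≤ ‖e n‖ * ‖v n - z‖ := norm_mul_le _ _
      _ ≤ 1 * ‖v n - z‖ := by
          have := he n; have := norm_nonneg (v n - z); nlinarith
      _ = ‖v n - z‖ := one_mul _
  have := h0.add hz
  rw [zero_add] at this
  simpa [mul_sub] using this


/-- The hereditary subalgebra `[ABA]` generated by `A` in `B`: the closed linear
span of `{a x b : a, b ∈ A, x ∈ B}`. -/
def hereditarySpan (A : NonUnitalStarSubalgebra ℂ B) : Set B :=
  closure (Submodule.span ℂ {z : B | ∃ a ∈ A, ∃ b ∈ A, ∃ x : B, z = a * x * b} : Set B)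

/-- A conditional expectation of `B` onto the C*-subalgebra `A`: an idempotent
positive `A`-bimodule map with range `A`. -/
def IsCondExp (A : NonUnitalStarSubalgebra ℂ B) (E : B →L[ℂ] B) : Prop :=
  (∀ x, E x ∈ A) ∧ (∀ a ∈ A, E a = a) ∧ (∀ x : B, 0 ≤ x → 0 ≤ E x) ∧
  (∀ a ∈ A, ∀ x, E (a * x) = a * E x) ∧ (∀ a ∈ A, ∀ x, E (x * a) = E x * a)

open Filter Topology

/-- If a conditional expectation `E : B → A` is multiplicative on the hereditary
subalgebra `[ABA]` generated by `A`, then `E(x a y) = E(x) a E(y)` for all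
`x, y ∈ B` and `a ∈ A`. -/
theorem condExp_mult_sandwich (A : NonUnitalStarSubalgebra ℂ B)
    (hA : IsClosed (A : Set B)) (E : B →L[ℂ] B) (hE : IsCondExp A E)
    (hmult : ∀ x ∈ hereditarySpan A, ∀ y ∈ hereditarySpan A, E (x * y) = E x * E y) :
    ∀ (x y : B), ∀ a ∈ A, E (x * a * y) = E x * a * E y := by
  obtain ⟨hmemE, hid, hpos, hleft, hright⟩ := hE
  intro x y a ha
  set w : B := E (x * a * y) with hw
  set T : B → B := fun b => star b * b + b * star b with hT
  have hTpos : ∀ b : B, 0 ≤ T b := fun b =>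
    add_nonneg (star_mul_self_nonneg b) (mul_star_self_nonneg b)
  set h : B := T a + T (E x) + T (E y) + T w with hh
  have hTmem : ∀ b ∈ A, T b ∈ A := fun b hb =>
    add_mem (mul_mem (star_mem hb) hb) (mul_mem hb (star_mem hb))
  have hmemw : w ∈ A := hw ▸ hmemE (x * a * y)
  have hmemh : h ∈ A := add_mem (add_mem (add_mem (hTmem a ha) (hTmem _ (hmemE x)))
    (hTmem _ (hmemE y))) (hTmem _ hmemw)
  have hh0 : 0 ≤ h := add_nonneg (add_nonneg (add_nonneg (hTpos a) (hTpos _)) (hTpos _)) (hTpos _)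
  have hTa : T a ≤ h := by
    calc T a ≤ T a + T (E x) := le_add_of_nonneg_right (hTpos _)
      _ ≤ T a + T (E x) + T (E y) := le_add_of_nonneg_right (hTpos _)
      _ ≤ T a + T (E x) + T (E y) + T w := le_add_of_nonneg_right (hTpos _)
  have hTEx : T (E x) ≤ h := by
    calc T (E x) ≤ T a + T (E x) := le_add_of_nonneg_left (hTpos _)
      _ ≤ T a + T (E x) + T (E y) := le_add_of_nonneg_right (hTpos _)
      _ ≤ T a + T (E x) + T (E y) + T w := le_add_of_nonneg_right (hTpos _)
  have hTEy : T (E y) ≤ h := by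
    calc T (E y) ≤ T a + T (E x) + T (E y) :=
          le_add_of_nonneg_left (add_nonneg (hTpos _) (hTpos _))
      _ ≤ T a + T (E x) + T (E y) + T w := le_add_of_nonneg_right (hTpos _)
  have hTw : T w ≤ h :=
    le_add_of_nonneg_left (add_nonneg (add_nonneg (hTpos _) (hTpos _)) (hTpos _))
  set e : ℕ → B := fun n => eUnit h n with he
  have hemem : ∀ n, e n ∈ A := fun n => eUnit_mem A hA hmemh hh0 n
  have henorm : ∀ n, ‖e n‖ ≤ 1 := fun n => eUnit_norm_le h hh0 n
  have hr : ∀ b : B, T b ≤ h → Tendsto (fun n => b * e n) atTop (𝓝 b) := fun b hb =>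
    tendsto_mul_eUnit hh0 ((le_add_of_nonneg_right (mul_star_self_nonneg b)).trans hb)
  have hl : ∀ b : B, T b ≤ h → Tendsto (fun n => e n * b) atTop (𝓝 b) := fun b hb =>
    tendsto_eUnit_mul hh0 ((le_add_of_nonneg_left (star_mul_self_nonneg b)).trans hb)
  have Iden : ∀ n, e n * (E (x * (a * e n) * y) * e n)
      = (e n * (E x * a)) * (e n * (E y * e n)) := by
    intro n
    have m1 : e n * x * a ∈ hereditarySpan A :=
      subset_closure (Submodule.subset_span ⟨e n, hemem n, a, ha, x, rfl⟩)
    have m2 : e n * y * e n ∈ hereditarySpan A :=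
      subset_closure (Submodule.subset_span ⟨e n, hemem n, e n, hemem n, y, rfl⟩)
    have key := hmult _ m1 _ m2
    have lhs1 : (e n * x * a) * (e n * y * e n) = e n * ((x * (a * e n) * y) * e n) := by
      noncomm_ring
    have lhs2 : E ((e n * x * a) * (e n * y * e n))
        = e n * (E (x * (a * e n) * y) * e n) := by
      rw [lhs1, hleft _ (hemem n), hright _ (hemem n)]
    have r1 : E (e n * x * a) = e n * (E x * a) := by
      rw [mul_assoc, hleft _ (hemem n), hright _ ha]
    have r2 : E (e n * y * e n) = e n * (E y * e n) := by
      rw [mul_assoc, hleft _ (hemem n), hright _ (hemem n)]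
    rw [← lhs2, ← r1, ← r2]
    exact key
  have inner0 : Tendsto (fun n => a * e n) atTop (𝓝 a) := hr a hTa
  have inner1 : Tendsto (fun n => E (x * (a * e n) * y)) atTop (𝓝 w) := by
    have hxy : Tendsto (fun n => x * (a * e n) * y) atTop (𝓝 (x * a * y)) :=
      (tendsto_const_nhds.mul inner0).mul tendsto_const_nhds
    have := (E.continuous.tendsto (x * a * y)).comp hxy
    rw [hw]
    exact this
  have inner2 : Tendsto (fun n => E (x * (a * e n) * y) * e n) atTop (𝓝 w) :=
    tendsto_mul_right_aux henorm inner1 (hr w hTw)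
  have lhsT : Tendsto (fun n => e n * (E (x * (a * e n) * y) * e n)) atTop (𝓝 w) :=
    tendsto_mul_left_aux henorm inner2 (hl w hTw)
  have p1 : Tendsto (fun n => e n * (E x * a)) atTop (𝓝 (E x * a)) := by
    have h1 : Tendsto (fun n => (e n * E x) * a) atTop (𝓝 (E x * a)) :=
      (hl (E x) hTEx).mul tendsto_const_nhds
    have : (fun n => (e n * E x) * a) = fun n => e n * (E x * a) := by
      funext n; rw [mul_assoc]
    rwa [this] at h1
  have p2 : Tendsto (fun n => e n * (E y * e n)) atTop (𝓝 (E y)) :=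
    tendsto_mul_left_aux henorm (hr (E y) hTEy) (hl (E y) hTEy)
  have rhsT : Tendsto (fun n => (e n * (E x * a)) * (e n * (E y * e n))) atTop
      (𝓝 (E x * a * E y)) := p1.mul p2
  have lhsT2 : Tendsto (fun n => e n * (E (x * (a * e n) * y) * e n)) atTop
      (𝓝 (E x * a * E y)) := rhsT.congr (fun n => (Iden n).symm)
  exact tendsto_nhds_unique lhsT lhsT2
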